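/- (Lemma concave.) Let a, c > 0 and t_0 ∈ (0,1) be such that (c ≥ 1 or 4a + 2c > 1 + c²) and t_0^c > a/(a + c). Then there exist b > 0 and r ≥ 1 such that the function h : [0,1] → ℝ, h(t) := t^a · (r − t)^{−b} · (1 − t^c), attains its maximum over [0,1] at t_0. -/

import Mathlib

open Real Set

set_option maxHeartbeats 1000000 in
/-- Lemma concave: if `a, c > 0`, `c ≥ 1` or `4a + 2c > 1 + c²`, and
`t₀ ∈ (0,1)` with `t₀^c > a/(a+c)`, then there are `b > 0`, `r ≥ 1` such that
`h(t) = t^a (r-t)^{-b} (1-t^c)` attains its maximum over `[0,1]` at `t₀`. -/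
theorem stmt16 (a c t₀ : ℝ) (ha : 0 < a) (hc : 0 < c)
    (hcond : 1 ≤ c ∨ 4 * a + 2 * c > 1 + c ^ 2)
    (ht₀ : t₀ ∈ Set.Ioo (0 : ℝ) 1) (ht : a / (a + c) < t₀ ^ c) :
    ∃ b r : ℝ, 0 < b ∧ 1 ≤ r ∧
      ∀ t ∈ Set.Icc (0 : ℝ) 1,
        t ^ a * (r - t) ^ (-b) * (1 - t ^ c) ≤
          t₀ ^ a * (r - t₀) ^ (-b) * (1 - t₀ ^ c) := by
  obtain ⟨ht0, ht1⟩ := ht₀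
  have hu₀1 : t₀ ^ c < 1 := Real.rpow_lt_one ht0.le ht1 hc
  have hu₀0 : 0 < t₀ ^ c := Real.rpow_pos_of_pos ht0 c
  have hw₀ : 0 < 1 - t₀ ^ c := by linarith
  set K := c * t₀ ^ (c-1) / (1 - t₀ ^ c) - a / t₀ with hKdef
  have htc1 : t₀ * t₀ ^ (c-1) = t₀ ^ c := by
    rw [Real.rpow_sub ht0, Real.rpow_one]; field_simp
  have hK : 0 < K := by
    have h' : a < t₀ ^ c * (a + c) := (div_lt_iff₀ (by linarith)).1 ht
    rw [hKdef, sub_pos, div_lt_div_iff₀ ht0 hw₀]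
    nlinarith [htc1, h']
  obtain ⟨δ, hδ0, hδ⟩ : ∃ δ > 0, ∀ u : ℝ, 0 ≤ u → u ≤ 1 →
      δ ≤ (a+c)*u^2 + (c^2 - c - 2*a)*u + a := by
    rcases hcond with h1 | h2
    · refine ⟨a*c^2/(a+c^2), by positivity, fun u hu0 hu1 => ?_⟩
      rw [div_le_iff₀ (by positivity)]
      nlinarith [sq_nonneg (a*(1-u) - c^2*u),
        mul_nonneg (mul_nonneg (mul_nonneg hc.le (sub_nonneg.2 h1)) hu0) (sub_nonneg.2 hu1)]
    · refine ⟨c^2*(4*a+2*c-1-c^2)/(4*(a+c)), div_pos (mul_pos (pow_pos hc 2) (by linarith)) (by positivity),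
        fun u hu0 hu1 => ?_⟩
      rw [div_le_iff₀ (by positivity)]
      nlinarith [sq_nonneg (2*(a+c)*u + (c^2-c-2*a))]
  set r := 2 + 2*K/δ with hrdef
  have hr2 : 2 ≤ r := by
    rw [hrdef]; have : 0 < 2*K/δ := by positivity
    linarith
  have hrt₀ : 0 < r - t₀ := by linarith
  set b := (r - t₀) * K with hbdef
  have hb : 0 < b := mul_pos hrt₀ hK
  have hr1 : 0 < r - 1 := by linarith
  -- the key smallness bound on b
  have hbound : b / (r - 1)^2 < δ := by
    rw [div_lt_iff₀ (by positivity)]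
    have hδr : δ * (r - 1) = δ + 2*K := by
      rw [hrdef]; field_simp; ring
    have key : δ*δ*b < δ*δ*(δ*(r-1)^2) := by
      have e1 : δ*δ*(δ*(r-1)^2) = δ*(δ*(r-1))^2 := by ring
      have e2 : δ*δ*b = (δ*(r-1))*(δ*K) + δ*(1-t₀)*(δ*K) := by rw [hbdef, hrdef]; ring
      rw [e1, e2, hδr]
      nlinarith [mul_pos (mul_pos hδ0 hδ0) hδ0, mul_pos (mul_pos hδ0 hδ0) hK,
        mul_pos (mul_pos hδ0 hK) hK, mul_pos (mul_pos (mul_pos hδ0 hδ0) hK) ht0]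
    exact lt_of_mul_lt_mul_left key (by positivity)
  refine ⟨b, r, hb, by linarith, ?_⟩
  set H : ℝ → ℝ := fun t => a * Real.log t - b * Real.log (r - t) + Real.log (1 - t ^ c)
    with hH
  set P : ℝ → ℝ := fun t => a / t + b / (r - t) - c * t ^ (c-1) / (1 - t ^ c) with hP
  set Q : ℝ → ℝ := fun t => b / (r - t)^2 -
      (a*(1 - t^c)^2 + c*(c-1)*(t^c)*(1 - t^c) + c^2*(t^c)^2) / (t^2 * (1 - t^c)^2) with hQ
  have hfacts : ∀ t ∈ Ioo (0:ℝ) 1, 0 < r - t ∧ 0 < t ^ c ∧ t ^ c < 1 := by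
    intro t htm
    exact ⟨by linarith [htm.2], Real.rpow_pos_of_pos htm.1 c,
      Real.rpow_lt_one htm.1.le htm.2 hc⟩
  have hasH : ∀ t ∈ Ioo (0:ℝ) 1, HasDerivAt H (P t) t := by
    intro t htm
    obtain ⟨hrt, hu0, hu1⟩ := hfacts t htm
    have ht0' := htm.1
    have h1 : HasDerivAt (fun t : ℝ => a * Real.log t) (a * t⁻¹) t :=
      (Real.hasDerivAt_log ht0'.ne').const_mul a
    have hrt' : HasDerivAt (fun t : ℝ => r - t) (-1) t := by
      simpa using (hasDerivAt_id t).const_sub r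
    have h2 : HasDerivAt (fun t : ℝ => Real.log (r - t)) ((r - t)⁻¹ * (-1)) t :=
      (Real.hasDerivAt_log hrt.ne').comp t hrt'
    have h3 : HasDerivAt (fun t : ℝ => t ^ c) (c * t ^ (c - 1)) t :=
      Real.hasDerivAt_rpow_const (Or.inl ht0'.ne')
    have h4 : HasDerivAt (fun t : ℝ => 1 - t ^ c) (-(c * t ^ (c - 1))) t := by
      simpa using h3.const_sub 1
    have h5 : HasDerivAt (fun t : ℝ => Real.log (1 - t ^ c))
        ((1 - t ^ c)⁻¹ * (-(c * t ^ (c - 1)))) t :=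
      (Real.hasDerivAt_log (by linarith)).comp t h4
    have hsum := (h1.sub (h2.const_mul b)).add h5
    rw [hH, hP]
    refine hsum.congr_deriv ?_
    field_simp
    ring
  have hasP : ∀ t ∈ Ioo (0:ℝ) 1, HasDerivAt P (Q t) t := by
    intro t htm
    obtain ⟨hrt, hu0, hu1⟩ := hfacts t htm
    have ht0' := htm.1
    have hu' : (0:ℝ) < 1 - t ^ c := by linarith
    have h1 : HasDerivAt (fun t : ℝ => a / t) ((0 * t - a * 1)/ t^2) t :=
      (hasDerivAt_const t a).div (hasDerivAt_id t) ht0'.ne'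
    have hrt' : HasDerivAt (fun t : ℝ => r - t) (-1) t := by
      simpa using (hasDerivAt_id t).const_sub r
    have h2 : HasDerivAt (fun t : ℝ => b / (r - t)) ((0 * (r-t) - b * (-1))/(r-t)^2) t :=
      (hasDerivAt_const t b).div hrt' hrt.ne'
    have h3 : HasDerivAt (fun t : ℝ => c * t ^ (c-1)) (c * ((c-1) * t ^ (c-1-1))) t :=
      (Real.hasDerivAt_rpow_const (Or.inl ht0'.ne')).const_mul c
    have h4 : HasDerivAt (fun t : ℝ => 1 - t ^ c) (-(c * t ^ (c - 1))) t := by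
      simpa using
        (Real.hasDerivAt_rpow_const (Or.inl ht0'.ne') (p := c)).const_sub 1
    have h5 := h3.div h4 hu'.ne'
    have hsum := (h1.add h2).sub h5
    rw [hP, hQ]
    refine hsum.congr_deriv ?_
    have e1 : t ^ (c-1) = t^c / t := by
      rw [Real.rpow_sub ht0', Real.rpow_one]
    have e2 : t ^ (c-1-1) = t^c / t^2 := by
      rw [Real.rpow_sub ht0', Real.rpow_sub ht0', Real.rpow_one, div_div]
      norm_num [sq]
    rw [e1, e2]
    have hne : (t:ℝ)^2 ≠ 0 := by positivity
    field_simp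
    ring
  have hQneg : ∀ t ∈ Ioo (0:ℝ) 1, Q t < 0 := by
    intro t htm
    obtain ⟨hrt, hu0, hu1⟩ := hfacts t htm
    have hw : (0:ℝ) < 1 - t ^ c := by linarith
    rw [hQ]
    have h1 : b / (r - t)^2 < δ := by
      refine lt_of_le_of_lt ?_ hbound
      apply div_le_div_of_nonneg_left hb.le (by positivity)
      have : r - 1 ≤ r - t := by linarith [htm.2]
      nlinarith
    have h2 : δ ≤ (a*(1 - t^c)^2 + c*(c-1)*(t^c)*(1 - t^c) + c^2*(t^c)^2)
        / (t^2 * (1 - t^c)^2) := by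
      rw [le_div_iff₀ (mul_pos (pow_pos htm.1 2) (pow_pos hw 2))]
      have hle1 : t^2 * (1 - t^c)^2 ≤ 1 := by
        have h3 : t^2 ≤ 1 := by nlinarith [htm.1, htm.2]
        have h4 : (1 - t^c)^2 ≤ 1 := by nlinarith
        nlinarith [sq_nonneg t, sq_nonneg (1 - t^c)]
      calc δ * (t^2 * (1 - t^c)^2) ≤ δ * 1 := by
            exact mul_le_mul_of_nonneg_left hle1 hδ0.le
        _ = δ := mul_one δ
        _ ≤ (a+c)*(t^c)^2 + (c^2 - c - 2*a)*(t^c) + a := hδ (t^c) hu0.le hu1.le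
        _ = a*(1 - t^c)^2 + c*(c-1)*(t^c)*(1 - t^c) + c^2*(t^c)^2 := by ring
    simp only []
    linarith [lt_of_lt_of_le h1 h2]
  have hPt₀ : P t₀ = 0 := by
    have hbK : b / (r - t₀) = K := by
      rw [hbdef, mul_comm, mul_div_assoc, div_self hrt₀.ne', mul_one]
    rw [hP]
    simp only []
    rw [hbK, hKdef]
    ring
  have hanti : StrictAntiOn P (Ioo 0 1) := by
    apply strictAntiOn_of_deriv_neg (convex_Ioo 0 1)
    · exact fun t htm => (hasP t htm).continuousAt.continuousWithinAt
    · intro t htm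
      rw [interior_Ioo] at htm
      rw [(hasP t htm).deriv]
      exact hQneg t htm
  have hHle : ∀ t ∈ Ioo (0:ℝ) 1, H t ≤ H t₀ := by
    intro t htm
    rcases lt_trichotomy t t₀ with hlt | heq | hgt
    · have hsub : Icc t t₀ ⊆ Ioo (0:ℝ) 1 :=
        fun x hx => ⟨lt_of_lt_of_le htm.1 hx.1, lt_of_le_of_lt hx.2 ht1⟩
      have hmono : StrictMonoOn H (Icc t t₀) := by
        apply strictMonoOn_of_deriv_pos (convex_Icc t t₀)
        · exact fun x hx => (hasH x (hsub hx)).continuousAt.continuousWithinAt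
        · intro x hx
          rw [interior_Icc] at hx
          have hxm : x ∈ Ioo (0:ℝ) 1 := hsub ⟨hx.1.le, hx.2.le⟩
          rw [(hasH x hxm).deriv]
          have := hanti hxm ⟨ht0, ht1⟩ hx.2
          rw [hPt₀] at this
          linarith
      exact (hmono ⟨le_refl t, hlt.le⟩ ⟨hlt.le, le_refl t₀⟩ hlt).le
    · rw [heq]
    · have hsub : Icc t₀ t ⊆ Ioo (0:ℝ) 1 :=
        fun x hx => ⟨lt_of_lt_of_le ht0 hx.1, lt_of_le_of_lt hx.2 htm.2⟩
      have hmono : StrictAntiOn H (Icc t₀ t) := by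
        apply strictAntiOn_of_deriv_neg (convex_Icc t₀ t)
        · exact fun x hx => (hasH x (hsub hx)).continuousAt.continuousWithinAt
        · intro x hx
          rw [interior_Icc] at hx
          have hxm : x ∈ Ioo (0:ℝ) 1 := hsub ⟨hx.1.le, hx.2.le⟩
          rw [(hasH x hxm).deriv]
          have := hanti ⟨ht0, ht1⟩ hxm hx.1
          rw [hPt₀] at this
          linarith
      exact (hmono ⟨le_refl t₀, hgt.le⟩ ⟨hgt.le, le_refl t⟩ hgt).le
  have hexp : ∀ t ∈ Ioo (0:ℝ) 1,
      t ^ a * (r - t) ^ (-b) * (1 - t ^ c) = Real.exp (H t) := by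
    intro t htm
    obtain ⟨hrt, hu0, hu1⟩ := hfacts t htm
    rw [Real.rpow_def_of_pos htm.1, Real.rpow_def_of_pos hrt,
      ← Real.exp_log (show (0:ℝ) < 1 - t^c by linarith), ← Real.exp_add, ← Real.exp_add,
      hH]
    congr 1
    ring
  -- final assembly
  intro t htm
  have hRHS : 0 < t₀ ^ a * (r - t₀) ^ (-b) * (1 - t₀ ^ c) := by
    have h1 := Real.rpow_pos_of_pos ht0 a
    have h2 := Real.rpow_pos_of_pos hrt₀ (-b)
    positivity
  rcases eq_or_lt_of_le htm.1 with h0 | h0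
  · rw [← h0, Real.zero_rpow ha.ne', zero_mul, zero_mul]
    exact hRHS.le
  rcases eq_or_lt_of_le htm.2 with h1 | h1
  · rw [h1]
    simp only [Real.one_rpow, sub_self, mul_zero]
    exact hRHS.le
  rw [hexp t ⟨h0, h1⟩, hexp t₀ ⟨ht0, ht1⟩]
  exact Real.exp_le_exp.2 (hHle t ⟨h0, h1⟩)
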